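/- Let d ≥ 3 and q > 0, and let A ⊆ {z ∈ ℝ^d : q ≤ |z| ≤ 8q} be a measurable set with Vol(A) > 0. Let N be a Poisson random variable with mean Vol(A), and let (Z_i)_{i≥1} be i.i.d. random vectors uniformly distributed on A and independent of N. Then there exist constants C, c, c' > 0 depending only on d such that for all t with 0 < t ≤ c'·q, P(|Σ_{i=1}^N Z_i/|Z_i|^d - ∫_A z/|z|^d dz| ≥ t) ≤ C·exp(-c·q^{d-2}·t²). -/

import Mathlib

open MeasureTheory ProbabilityTheory

lemma exp_sub_one_le' {x : ℝ} (hx : |x| ≤ 1) : Real.exp x - 1 ≤ x + x ^ 2 := by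
  have h := Real.exp_bound hx (n := 2) (by norm_num)
  have h2 : ∑ m ∈ Finset.range 2, x ^ m / (Nat.factorial m) = 1 + x := by
    simp [Finset.sum_range_succ]
  rw [h2] at h
  have h3 : Real.exp x - (1 + x) ≤ |x| ^ 2 * (3 / (2 * 2)) := by
    calc Real.exp x - (1 + x) ≤ |Real.exp x - (1 + x)| := le_abs_self _
      _ ≤ |x| ^ 2 * (↑(Nat.succ 2) / (↑(Nat.factorial 2) * 2)) := h
      _ = |x| ^ 2 * (3 / (2 * 2)) := by norm_num [Nat.factorial]
  have h4 : |x| ^ 2 = x ^ 2 := sq_abs x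
  nlinarith [sq_nonneg x]


-- MGF of compound Poisson functional (lintegral form)
lemma mgf_compound {D : Type*} [MeasurableSpace D]
    {Ω : Type} [MeasureSpace Ω] [IsProbabilityMeasure (ℙ : Measure Ω)]
    (μA : Measure D)
    (N : Ω → ℕ) (hNm : Measurable N)
    (Z : ℕ → Ω → D) (hZm : ∀ i, Measurable (Z i))
    (hZlaw : ∀ i, Measure.map (Z i) ℙ = (μA Set.univ)⁻¹ • μA)
    (hZindep : iIndepFun Z ℙ)
    (hNZ : IndepFun N (fun ω i => Z i ω) ℙ)
    (h : D → ℝ) (hhm : Measurable h) :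
    ∫⁻ ω, ENNReal.ofReal (Real.exp (∑ i ∈ Finset.range (N ω), h (Z i ω))) ∂ℙ
      = ∑' n : ℕ, ℙ {ω | N ω = n} *
          ((μA Set.univ)⁻¹ * ∫⁻ z, ENNReal.ofReal (Real.exp (h z)) ∂μA) ^ n := by
  classical
  set M : ENNReal := (μA Set.univ)⁻¹ * ∫⁻ z, ENNReal.ofReal (Real.exp (h z)) ∂μA with hM
  -- the family W
  set W : ℕ → Ω → ENNReal := fun i ω => ENNReal.ofReal (Real.exp (h (Z i ω))) with hW
  have hWm : ∀ i, Measurable (W i) := fun i =>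
    (ENNReal.measurable_ofReal.comp (Real.measurable_exp.comp (hhm.comp (hZm i))))
  have hWindep : iIndepFun W ℙ :=
    hZindep.comp (fun _ x => ENNReal.ofReal (Real.exp (h x)))
      (fun _ => ENNReal.measurable_ofReal.comp (Real.measurable_exp.comp hhm))
  have hWint : ∀ i, ∫⁻ ω, W i ω ∂ℙ = M := by
    intro i
    have : ∫⁻ ω, W i ω ∂ℙ
        = ∫⁻ z, ENNReal.ofReal (Real.exp (h z)) ∂(Measure.map (Z i) ℙ) := by
      rw [lintegral_map (f := fun z => ENNReal.ofReal (Real.exp (h z)))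
        (ENNReal.measurable_ofReal.comp (Real.measurable_exp.comp hhm)) (hZm i)]
    rw [this, hZlaw i, lintegral_smul_measure, smul_eq_mul]
  -- product of the W's
  have hprod : ∀ n, ∫⁻ ω, ∏ i ∈ Finset.range n, W i ω ∂ℙ = M ^ n := by
    intro n
    induction n with
    | zero => simp
    | succ n ih =>
      have hind := hWindep.indepFun_prod_range_succ hWm n
      have hmp : Measurable (∏ j ∈ Finset.range n, W j) := by
        rw [Finset.prod_fn]; exact Finset.measurable_prod _ (fun i _ => hWm i)
      have := lintegral_mul_eq_lintegral_mul_lintegral_of_indepFun hmp (hWm n) hind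
      simp only [Pi.mul_apply, Finset.prod_apply] at this ⊢
      calc ∫⁻ ω, ∏ i ∈ Finset.range (n+1), W i ω ∂ℙ
          = ∫⁻ ω, (∏ i ∈ Finset.range n, W i ω) * W n ω ∂ℙ := by
            simp [Finset.prod_range_succ]
        _ = (∫⁻ ω, ∏ i ∈ Finset.range n, W i ω ∂ℙ) * ∫⁻ ω, W n ω ∂ℙ := this
        _ = M ^ (n+1) := by rw [ih, hWint n, pow_succ]
  -- partition by N
  have hpart : (Set.univ : Set Ω) = ⋃ n : ℕ, {ω | N ω = n} := by
    ext ω; simp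
  have hmeasn : ∀ n : ℕ, MeasurableSet {ω | N ω = n} := fun n =>
    hNm (measurableSet_singleton n)
  have key : ∫⁻ ω, ENNReal.ofReal (Real.exp (∑ i ∈ Finset.range (N ω), h (Z i ω))) ∂ℙ
      = ∑' n : ℕ, ∫⁻ ω in {ω | N ω = n},
          ENNReal.ofReal (Real.exp (∑ i ∈ Finset.range (N ω), h (Z i ω))) ∂ℙ := by
    rw [← lintegral_iUnion hmeasn ?_ _, ← hpart, setLIntegral_univ]
    intro m n hmn
    simp only [Function.onFun, Set.disjoint_left]
    intro ω hm hn
    exact hmn (hm.symm.trans hn)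
  rw [key]
  congr 1
  ext n
  -- on {N = n}, integrand equals the product of W's over range n
  have hcong : ∫⁻ ω in {ω | N ω = n},
        ENNReal.ofReal (Real.exp (∑ i ∈ Finset.range (N ω), h (Z i ω))) ∂ℙ
      = ∫⁻ ω in {ω | N ω = n}, ∏ i ∈ Finset.range n, W i ω ∂ℙ := by
    apply setLIntegral_congr_fun (hmeasn n)
    intro ω hω
    simp only [Set.mem_setOf_eq] at hω ⊢
    rw [hω, Real.exp_sum]
    rw [ENNReal.ofReal_prod_of_nonneg (fun i _ => (Real.exp_pos _).le)]
  rw [hcong]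
  -- independence: split off the indicator of {N = n}
  set φ : ℕ → ENNReal := fun k => if k = n then 1 else 0 with hφ
  set ψ : (ℕ → D) → ENNReal := fun v => ∏ i ∈ Finset.range n, ENNReal.ofReal (Real.exp (h (v i)))
    with hψ
  have hφm : Measurable φ := measurable_from_nat
  have hψm : Measurable ψ := Finset.measurable_prod _ (fun i _ =>
    ENNReal.measurable_ofReal.comp (Real.measurable_exp.comp (hhm.comp (measurable_pi_apply i))))
  have hind : IndepFun (φ ∘ N) (ψ ∘ (fun ω i => Z i ω)) ℙ := hNZ.comp hφm hψm
  have hres : ∫⁻ ω in {ω | N ω = n}, ∏ i ∈ Finset.range n, W i ω ∂ℙ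
      = ∫⁻ ω, ((φ ∘ N) * (ψ ∘ (fun ω i => Z i ω))) ω ∂ℙ := by
    rw [← lintegral_indicator (hmeasn n)]
    congr 1
    ext ω
    by_cases hω : N ω = n
    · simp [Set.indicator_apply, hω, hφ, hψ, hW, Set.mem_setOf_eq]
    · simp [Set.indicator_apply, hω, hφ, Set.mem_setOf_eq]
  have hψmeas2 : Measurable (ψ ∘ (fun ω i => Z i ω)) :=
    hψm.comp (measurable_pi_lambda _ (fun i => hZm i))
  rw [hres, lintegral_mul_eq_lintegral_mul_lintegral_of_indepFun (hφm.comp hNm) hψmeas2 hind]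
  have h1 : ∫⁻ ω, (φ ∘ N) ω ∂ℙ = ℙ {ω | N ω = n} := by
    have : (φ ∘ N) = Set.indicator {ω | N ω = n} 1 := by
      ext ω
      by_cases hω : N ω = n <;> simp [Set.indicator_apply, hω, hφ, Set.mem_setOf_eq]
    rw [this, lintegral_indicator_one (hmeasn n)]
  have h2 : ∫⁻ ω, (ψ ∘ (fun ω i => Z i ω)) ω ∂ℙ = M ^ n := by
    rw [← hprod n]
    rfl
  rw [h1, h2]

lemma scalar_tail {D : Type*} [MeasurableSpace D]
    {Ω : Type} [MeasureSpace Ω] [IsProbabilityMeasure (ℙ : Measure Ω)]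
    (μA : Measure D) (hA0 : 0 < μA Set.univ) (hAfin : μA Set.univ ≠ ⊤)
    (N : Ω → ℕ) (hNm : Measurable N)
    (hNpois : ∀ n : ℕ, ℙ {ω | N ω = n} =
      ENNReal.ofReal (Real.exp (-(μA Set.univ).toReal) * (μA Set.univ).toReal ^ n /
        (Nat.factorial n)))
    (Z : ℕ → Ω → D) (hZm : ∀ i, Measurable (Z i))
    (hZlaw : ∀ i, Measure.map (Z i) ℙ = (μA Set.univ)⁻¹ • μA)
    (hZindep : iIndepFun Z ℙ)
    (hNZ : IndepFun N (fun ω i => Z i ω) ℙ)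
    (g : D → ℝ) (hgm : Measurable g) (b : ℝ) (hb0 : 0 < b)
    (hgb : ∀ᵐ z ∂μA, |g z| ≤ b)
    (θ : ℝ) (hθ0 : 0 ≤ θ) (hθb : θ * b ≤ 1) (s : ℝ) :
    ℙ {ω | s ≤ (∑ i ∈ Finset.range (N ω), g (Z i ω)) - ∫ z, g z ∂μA} ≤
      ENNReal.ofReal (Real.exp (θ ^ 2 * (∫ z, (g z) ^ 2 ∂μA) - θ * s)) := by
  classical
  have hAfinm : IsFiniteMeasure μA := ⟨lt_top_iff_ne_top.2 hAfin⟩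
  set V : ℝ := (μA Set.univ).toReal with hVdef
  have hV0 : 0 < V := ENNReal.toReal_pos hA0.ne' hAfin
  have hVA : μA Set.univ = ENNReal.ofReal V := (ENNReal.ofReal_toReal hAfin).symm
  set I : ℝ := ∫ z, g z ∂μA with hIdef
  set Q : ℝ := ∫ z, (g z) ^ 2 ∂μA with hQdef
  -- integrabilities
  have hgint : Integrable g μA := by
    refine Integrable.mono' (integrable_const b) hgm.aestronglyMeasurable ?_
    filter_upwards [hgb] with z hz using by rwa [Real.norm_eq_abs]
  have hg2int : Integrable (fun z => (g z) ^ 2) μA := by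
    refine Integrable.mono' (integrable_const (b ^ 2)) ((hgm.pow_const 2).aestronglyMeasurable) ?_
    filter_upwards [hgb] with z hz
    rw [Real.norm_eq_abs, abs_pow]
    exact pow_le_pow_left₀ (abs_nonneg _) hz 2
  have hexpint : Integrable (fun z => Real.exp (θ * g z)) μA := by
    refine Integrable.mono' (integrable_const (Real.exp 1))
      ((Real.measurable_exp.comp (hgm.const_mul θ)).aestronglyMeasurable) ?_
    filter_upwards [hgb] with z hz
    rw [Real.norm_eq_abs, abs_of_pos (Real.exp_pos _)]
    apply Real.exp_le_exp.2
    calc θ * g z ≤ θ * |g z| := by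
          rcases le_total 0 (g z) with h | h
          · rw [abs_of_nonneg h]
          · exact mul_le_mul_of_nonneg_left (le_abs_self _) hθ0
      _ ≤ θ * b := mul_le_mul_of_nonneg_left hz hθ0
      _ ≤ 1 := hθb
  set J : ℝ := ∫ z, Real.exp (θ * g z) ∂μA with hJdef
  have hJ0 : 0 ≤ J := integral_nonneg (fun z => (Real.exp_pos _).le)
  -- S is measurable
  set S : Ω → ℝ := fun ω => ∑ i ∈ Finset.range (N ω), g (Z i ω) with hSdef
  have hSm : Measurable S := by
    have hF : Measurable (fun p : (ℕ → D) × ℕ => ∑ i ∈ Finset.range p.2, g (p.1 i)) := by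
      apply measurable_from_prod_countable_left
      intro n
      show Measurable fun v : ℕ → D => ∑ i ∈ Finset.range n, g (v i)
      exact Finset.measurable_sum _ (fun i _ => hgm.comp (measurable_pi_apply i))
    exact hF.comp ((measurable_pi_lambda _ hZm).prodMk hNm)
  have hinnerm : Measurable
      (fun ω => ENNReal.ofReal (Real.exp (∑ i ∈ Finset.range (N ω), θ * g (Z i ω)))) := by
    have hF : Measurable (fun p : (ℕ → D) × ℕ => ∑ i ∈ Finset.range p.2, θ * g (p.1 i)) := by
      apply measurable_from_prod_countable_left
      intro n
      show Measurable fun v : ℕ → D => ∑ i ∈ Finset.range n, θ * g (v i)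
      exact Finset.measurable_sum _ (fun i _ => (hgm.comp (measurable_pi_apply i)).const_mul θ)
    exact ENNReal.measurable_ofReal.comp (Real.measurable_exp.comp
      (hF.comp ((measurable_pi_lambda _ hZm).prodMk hNm)))
  -- Markov / Chernoff
  have hfm : Measurable (fun ω => ENNReal.ofReal (Real.exp (θ * (S ω - I)))) :=
    ENNReal.measurable_ofReal.comp
      (Real.measurable_exp.comp ((hSm.sub measurable_const).const_mul θ))
  have markov : ENNReal.ofReal (Real.exp (θ * s)) * ℙ {ω | s ≤ S ω - I} ≤
      ∫⁻ ω, ENNReal.ofReal (Real.exp (θ * (S ω - I))) ∂ℙ := by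
    refine le_trans ?_
      (mul_meas_ge_le_lintegral₀ hfm.aemeasurable (ENNReal.ofReal (Real.exp (θ * s))))
    apply mul_le_mul_right
    apply measure_mono
    intro ω hω
    simp only [Set.mem_setOf_eq] at hω ⊢
    exact ENNReal.ofReal_le_ofReal (Real.exp_le_exp.2 (mul_le_mul_of_nonneg_left hω hθ0))
  -- compute the mgf
  have hJlin : ∫⁻ z, ENNReal.ofReal (Real.exp (θ * g z)) ∂μA = ENNReal.ofReal J := by
    rw [← ofReal_integral_eq_lintegral_ofReal hexpint
      (Filter.Eventually.of_forall fun z => (Real.exp_pos _).le)]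
  have hmgf : ∫⁻ ω, ENNReal.ofReal (Real.exp (θ * (S ω - I))) ∂ℙ =
      ENNReal.ofReal (Real.exp (J - V - θ * I)) := by
    have hsplit : ∀ ω, ENNReal.ofReal (Real.exp (θ * (S ω - I))) =
        ENNReal.ofReal (Real.exp (-(θ * I))) *
          ENNReal.ofReal (Real.exp (∑ i ∈ Finset.range (N ω), θ * g (Z i ω))) := by
      intro ω
      rw [← ENNReal.ofReal_mul (Real.exp_pos _).le, ← Real.exp_add]
      congr 2
      rw [← Finset.mul_sum]
      ring
    calc ∫⁻ ω, ENNReal.ofReal (Real.exp (θ * (S ω - I))) ∂ℙ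
        = ∫⁻ ω, ENNReal.ofReal (Real.exp (-(θ * I))) *
            ENNReal.ofReal (Real.exp (∑ i ∈ Finset.range (N ω), θ * g (Z i ω))) ∂ℙ :=
          lintegral_congr hsplit
      _ = ENNReal.ofReal (Real.exp (-(θ * I))) *
            ∫⁻ ω, ENNReal.ofReal (Real.exp (∑ i ∈ Finset.range (N ω), θ * g (Z i ω))) ∂ℙ :=
          lintegral_const_mul _ hinnerm
      _ = ENNReal.ofReal (Real.exp (-(θ * I))) *
            ∑' n : ℕ, ℙ {ω | N ω = n} *
              ((μA Set.univ)⁻¹ * ∫⁻ z, ENNReal.ofReal (Real.exp (θ * g z)) ∂μA) ^ n := by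
          rw [mgf_compound μA N hNm Z hZm hZlaw hZindep hNZ (fun z => θ * g z) (hgm.const_mul θ)]
      _ = ENNReal.ofReal (Real.exp (-(θ * I))) * ENNReal.ofReal (Real.exp (J - V)) := by
          congr 1
          have hMval : (μA Set.univ)⁻¹ * ∫⁻ z, ENNReal.ofReal (Real.exp (θ * g z)) ∂μA =
              ENNReal.ofReal (V⁻¹ * J) := by
            rw [hJlin, hVA, ← ENNReal.ofReal_inv_of_pos hV0,
              ← ENNReal.ofReal_mul (inv_nonneg.2 hV0.le)]
          have hterm : ∀ n : ℕ, ℙ {ω | N ω = n} *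
              ((μA Set.univ)⁻¹ * ∫⁻ z, ENNReal.ofReal (Real.exp (θ * g z)) ∂μA) ^ n =
              ENNReal.ofReal (Real.exp (-V) * (J ^ n / (Nat.factorial n))) := by
            intro n
            rw [hMval, hNpois n, ← ENNReal.ofReal_pow (by positivity),
              ← ENNReal.ofReal_mul (by positivity)]
            congr 1
            have hVn : V ^ n ≠ 0 := pow_ne_zero _ hV0.ne'
            rw [mul_pow, inv_pow]
            field_simp
          simp only [hterm]
          rw [← ENNReal.ofReal_tsum_of_nonneg (fun n => by positivity)
            (by simpa using (Real.summable_pow_div_factorial J).mul_left (Real.exp (-V)))]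
          congr 1
          rw [tsum_mul_left]
          have : ∑' n : ℕ, J ^ n / (Nat.factorial n : ℝ) = Real.exp J := by
            rw [Real.exp_eq_exp_ℝ, NormedSpace.exp_eq_tsum_div]
          rw [this, ← Real.exp_add, show -V + J = J - V by ring]
      _ = ENNReal.ofReal (Real.exp (J - V - θ * I)) := by
          rw [← ENNReal.ofReal_mul (Real.exp_pos _).le, ← Real.exp_add,
            show -(θ * I) + (J - V) = J - V - θ * I by ring]
  -- final comparison: J - V ≤ θ * I + θ^2 * Q
  have hθg2int : Integrable (fun z => (θ * g z) ^ 2) μA := by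
    simpa [mul_pow] using hg2int.const_mul (θ ^ 2)
  have hJV : J - V ≤ θ * I + θ ^ 2 * Q := by
    have hint1 : ∫ z, (Real.exp (θ * g z) - 1) ∂μA = J - V := by
      rw [integral_sub hexpint (integrable_const 1), integral_const, smul_eq_mul, mul_one]
      rfl
    have hint2 : ∫ z, (θ * g z + (θ * g z) ^ 2) ∂μA = θ * I + θ ^ 2 * Q := by
      rw [integral_add (hgint.const_mul θ) hθg2int]
      congr 1
      · exact integral_const_mul θ g
      · simp only [mul_pow]
        exact integral_const_mul (θ ^ 2) _
    rw [← hint1, ← hint2]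
    apply integral_mono_ae (hexpint.sub (integrable_const 1))
      ((hgint.const_mul θ).add hθg2int)
    filter_upwards [hgb] with z hz
    have habs : |θ * g z| ≤ 1 := by
      rw [abs_mul, abs_of_nonneg hθ0]
      calc θ * |g z| ≤ θ * b := mul_le_mul_of_nonneg_left hz hθ0
        _ ≤ 1 := hθb
    simp only [Pi.sub_apply, Pi.add_apply]
    linarith [exp_sub_one_le' habs]
  -- put everything together
  have hfinal : ℙ {ω | s ≤ S ω - I} ≤
      ENNReal.ofReal (Real.exp (J - V - θ * I - θ * s)) := by
    have hpos : (0 : ENNReal) < ENNReal.ofReal (Real.exp (θ * s)) :=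
      ENNReal.ofReal_pos.2 (Real.exp_pos _)
    rw [hmgf] at markov
    calc ℙ {ω | s ≤ S ω - I}
        = (ENNReal.ofReal (Real.exp (θ * s)))⁻¹ *
            (ENNReal.ofReal (Real.exp (θ * s)) * ℙ {ω | s ≤ S ω - I}) := by
          rw [← mul_assoc, ENNReal.inv_mul_cancel hpos.ne' ENNReal.ofReal_ne_top, one_mul]
      _ ≤ (ENNReal.ofReal (Real.exp (θ * s)))⁻¹ *
            ENNReal.ofReal (Real.exp (J - V - θ * I)) := mul_le_mul_right markov _
      _ = ENNReal.ofReal (Real.exp (J - V - θ * I - θ * s)) := by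
          rw [← ENNReal.ofReal_inv_of_pos (Real.exp_pos _), ← Real.exp_neg,
            ← ENNReal.ofReal_mul (Real.exp_pos _).le, ← Real.exp_add,
            show -(θ * s) + (J - V - θ * I) = J - V - θ * I - θ * s by ring]
  refine le_trans hfinal (ENNReal.ofReal_le_ofReal (Real.exp_le_exp.2 ?_))
  linarith

set_option maxHeartbeats 1000000 in
/-- Single-annulus moderate deviation estimate. Let `d ≥ 3`, `q > 0`, and
`A ⊆ {q ≤ |z| ≤ 8q}` with `Vol(A) > 0`. Let `N` be Poisson with mean `Vol(A)` and `(Z_i)`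
i.i.d. uniform on `A`, independent of `N`. Then there are `C, c, c' > 0` depending only on
`d` such that for `0 < t ≤ c'·q`,
`P(|Σ_{i=1}^N Z_i/|Z_i|^d - ∫_A z/|z|^d dz| ≥ t) ≤ C·exp(-c·q^{d-2}·t²)`. -/
theorem annulus_force_moderate_deviation (d : ℕ) (hd : 3 ≤ d) :
    ∃ C : ℝ, 0 < C ∧ ∃ c : ℝ, 0 < c ∧ ∃ c' : ℝ, 0 < c' ∧
      ∀ (q : ℝ), 0 < q →
      ∀ (A : Set (EuclideanSpace ℝ (Fin d))), MeasurableSet A →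
        A ⊆ {z | q ≤ ‖z‖ ∧ ‖z‖ ≤ 8 * q} → 0 < volume A →
      ∀ (Ω : Type) (_ : MeasureSpace Ω), IsProbabilityMeasure (ℙ : Measure Ω) →
      ∀ (N : Ω → ℕ), Measurable N →
        -- `N` is Poisson with mean `Vol(A)`
        (∀ n : ℕ, ℙ {ω | N ω = n} =
          ENNReal.ofReal (Real.exp (-(volume A).toReal) * (volume A).toReal ^ n /
            (Nat.factorial n))) →
      ∀ (Z : ℕ → Ω → EuclideanSpace ℝ (Fin d)), (∀ i, Measurable (Z i)) →
        -- the `Z_i` are uniformly distributed on `A` ...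
        (∀ i, Measure.map (Z i) ℙ = (volume A)⁻¹ • volume.restrict A) →
        -- ... mutually independent ...
        iIndepFun Z ℙ →
        -- ... and the whole family `(Z_i)` is independent of `N`
        IndepFun N (fun ω i => Z i ω) ℙ →
      ∀ t : ℝ, 0 < t → t ≤ c' * q →
        ℙ {ω | t ≤ ‖(∑ i ∈ Finset.range (N ω), (‖Z i ω‖ ^ d)⁻¹ • Z i ω) -
              ∫ z in A, (‖z‖ ^ d)⁻¹ • z‖} ≤
          ENNReal.ofReal (C * Real.exp (-c * q ^ (d - 2) * t ^ 2)) := by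
  classical
  set E := EuclideanSpace ℝ (Fin d)
  have hd0 : 0 < (d : ℝ) := by positivity
  set B : ℝ := (volume (Metric.ball (0 : E) 1)).toReal with hB
  have hB0 : 0 ≤ B := ENNReal.toReal_nonneg
  set K : ℝ := 8 ^ d * B + 1 with hK
  have hK0 : 0 < K := by positivity
  set sd : ℝ := Real.sqrt d with hsd
  have hsd0 : 0 < sd := Real.sqrt_pos.2 hd0
  have hsd2 : sd ^ 2 = d := Real.sq_sqrt hd0.le
  set a : ℝ := min 1 (1 / (2 * K * sd)) with ha
  have ha0 : 0 < a := lt_min one_pos (by positivity)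
  have ha1 : a ≤ 1 := min_le_left _ _
  have haK : a * (8 ^ d * B) ≤ 1 / (2 * sd) := by
    have h1 : a ≤ 1 / (2 * K * sd) := min_le_right _ _
    have h2 : (8:ℝ) ^ d * B ≤ K := by rw [hK]; linarith
    calc a * (8 ^ d * B) ≤ (1 / (2 * K * sd)) * K :=
          mul_le_mul h1 h2 (by positivity) (by positivity)
      _ = 1 / (2 * sd) := by field_simp
  refine ⟨2 * d, by positivity, a / (2 * sd), by positivity, 1, one_pos, ?_⟩
  intro q hq A hAm hAsub hA0 Ω mΩ hP N hNm hNpois Z hZm hZlaw hZind hNZ t ht htq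
  rw [one_mul] at htq
  set c : ℝ := a / (2 * sd) with hc
  -- basic facts about A
  have hAsubcb : A ⊆ Metric.closedBall (0 : E) (8 * q) := by
    intro z hz
    rw [Metric.mem_closedBall, dist_zero_right]
    exact (hAsub hz).2
  have hAfin : volume A ≠ ⊤ :=
    ((measure_mono hAsubcb).trans_lt measure_closedBall_lt_top).ne
  set μA : Measure E := volume.restrict A with hμA
  have hμAuniv : μA Set.univ = volume A := Measure.restrict_apply_univ A
  have hμA0 : 0 < μA Set.univ := by rw [hμAuniv]; exact hA0
  have hμAfin : μA Set.univ ≠ ⊤ := by rw [hμAuniv]; exact hAfin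
  have hAfinm : IsFiniteMeasure μA := ⟨by rw [hμAuniv]; exact lt_top_iff_ne_top.2 hAfin⟩
  set V : ℝ := (volume A).toReal with hV
  have hV0 : 0 < V := ENNReal.toReal_pos hA0.ne' hAfin
  -- volume bound
  have hVbound : V ≤ 8 ^ d * B * q ^ d := by
    have h1 : volume (Metric.closedBall (0 : E) (8 * q)) =
        ENNReal.ofReal ((8 * q) ^ d) * volume (Metric.ball (0 : E) 1) := by
      rw [Measure.addHaar_closedBall _ _ (by positivity),
        show Module.finrank ℝ E = d from finrank_euclideanSpace_fin (𝕜 := ℝ)]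
    have h2 : volume A ≤ ENNReal.ofReal ((8 * q) ^ d) * volume (Metric.ball (0 : E) 1) := by
      rw [← h1]; exact measure_mono hAsubcb
    have h3 : V ≤ (8 * q) ^ d * B := by
      rw [hV, hB]
      calc (volume A).toReal ≤ (ENNReal.ofReal ((8 * q) ^ d) *
            volume (Metric.ball (0 : E) 1)).toReal := by
            apply ENNReal.toReal_mono _ h2
            exact ENNReal.mul_ne_top ENNReal.ofReal_ne_top
              (measure_ball_lt_top).ne
        _ = (8 * q) ^ d * (volume (Metric.ball (0 : E) 1)).toReal := by
            rw [ENNReal.toReal_mul, ENNReal.toReal_ofReal (by positivity)]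
    calc V ≤ (8 * q) ^ d * B := h3
      _ = 8 ^ d * B * q ^ d := by rw [mul_pow]; ring
  -- bound parameters
  set b : ℝ := (q ^ (d - 1))⁻¹ with hbdef
  have hb0 : 0 < b := by positivity
  set X : ℝ := q ^ (d - 2) with hX
  have hX0 : 0 < X := by positivity
  set θ : ℝ := a * X * t with hθ
  have hθ0 : 0 ≤ θ := by positivity
  have hpowd1 : q ^ (d - 1) = X * q := by
    rw [hX, ← pow_succ]
    congr 1
    omega
  have hθb : θ * b ≤ 1 := by
    have : θ * b = a * t / q := by
      rw [hθ, hbdef, hpowd1]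
      field_simp
    rw [this, div_le_one hq]
    nlinarith
  -- coordinate functions
  set g : Fin d → E → ℝ := fun j z => (‖z‖ ^ d)⁻¹ * z j with hg
  have hgm : ∀ j, Measurable (g j) := fun j =>
    ((measurable_norm.pow_const d).inv).mul (EuclideanSpace.proj (𝕜 := ℝ) j).measurable
  have habscoord : ∀ (x : E) (j : Fin d), |x j| ≤ ‖x‖ := by
    intro x j
    rw [EuclideanSpace.norm_eq, ← Real.sqrt_sq (abs_nonneg (x j))]
    apply Real.sqrt_le_sqrt
    rw [sq_abs]
    calc x j ^ 2 ≤ ∑ i : Fin d, x i ^ 2 :=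
        Finset.single_le_sum (fun i _ => sq_nonneg (x i)) (Finset.mem_univ j)
      _ = ∑ i : Fin d, ‖x i‖ ^ 2 := by simp [Real.norm_eq_abs, sq_abs]
  have hnormbound : ∀ z ∈ A, (‖z‖ ^ d)⁻¹ * ‖z‖ ≤ b := by
    intro z hz
    obtain ⟨hz1, _⟩ := hAsub hz
    have hzpos : 0 < ‖z‖ := lt_of_lt_of_le hq hz1
    have hzd : ‖z‖ ^ d = ‖z‖ ^ (d - 1) * ‖z‖ := by
      rw [← pow_succ]
      congr 1
      omega
    rw [hzd, mul_inv, mul_assoc, inv_mul_cancel₀ hzpos.ne', mul_one, hbdef]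
    exact inv_anti₀ (by positivity) (pow_le_pow_left₀ hq.le hz1 _)
  have hgb : ∀ j, ∀ z ∈ A, |g j z| ≤ b := by
    intro j z hz
    obtain ⟨hz1, _⟩ := hAsub hz
    have hzpos : 0 < ‖z‖ := lt_of_lt_of_le hq hz1
    calc |g j z| = (‖z‖ ^ d)⁻¹ * |z j| := by
          rw [hg, abs_mul, abs_of_nonneg (by positivity : (0:ℝ) ≤ (‖z‖ ^ d)⁻¹)]
      _ ≤ (‖z‖ ^ d)⁻¹ * ‖z‖ := by
          exact mul_le_mul_of_nonneg_left (habscoord z j) (by positivity)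
      _ ≤ b := hnormbound z hz
  have hgbae : ∀ j, ∀ᵐ z ∂μA, |g j z| ≤ b := fun j =>
    (ae_restrict_iff' hAm).2 (Filter.Eventually.of_forall (hgb j))
  -- second moment bound
  set Q : Fin d → ℝ := fun j => ∫ z, (g j z) ^ 2 ∂μA with hQ
  have hg2int : ∀ j, Integrable (fun z => (g j z) ^ 2) μA := by
    intro j
    refine Integrable.mono' (integrable_const (b ^ 2))
      (((hgm j).pow_const 2).aestronglyMeasurable) ?_
    filter_upwards [hgbae j] with z hz
    rw [Real.norm_eq_abs, abs_pow]
    exact pow_le_pow_left₀ (abs_nonneg _) hz 2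
  have hμAV : (μA Set.univ).toReal = V := by rw [hμAuniv]
  have hQb : ∀ j, Q j ≤ 8 ^ d * B * X⁻¹ := by
    intro j
    have h1 : Q j ≤ V * b ^ 2 := by
      rw [hQ]
      calc (∫ z, (g j z) ^ 2 ∂μA) ≤ ∫ _z, b ^ 2 ∂μA := by
            apply integral_mono_ae (hg2int j) (integrable_const _)
            filter_upwards [hgbae j] with z hz
            rw [← sq_abs]
            exact pow_le_pow_left₀ (abs_nonneg _) hz 2
        _ = V * b ^ 2 := by rw [integral_const, smul_eq_mul, measureReal_def, hμAV]
    have hqdb : q ^ d * b ^ 2 = X⁻¹ := by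
      have hiden : q ^ d * X = q ^ (d - 1) * q ^ (d - 1) := by
        rw [hX, ← pow_add, ← pow_add]
        congr 1
        omega
      rw [hbdef, sq, ← mul_inv, ← hiden]
      field_simp
    calc Q j ≤ V * b ^ 2 := h1
      _ ≤ (8 ^ d * B * q ^ d) * b ^ 2 := by
          exact mul_le_mul_of_nonneg_right hVbound (by positivity)
      _ = 8 ^ d * B * (q ^ d * b ^ 2) := by ring
      _ = 8 ^ d * B * X⁻¹ := by rw [hqdb]
  -- exponent bound
  have hexp : ∀ j, θ ^ 2 * Q j - θ * (t / sd) ≤ -c * X * t ^ 2 := by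
    intro j
    have hQj0 : 0 ≤ Q j := integral_nonneg (fun z => sq_nonneg _)
    have h1 : θ ^ 2 * Q j ≤ θ ^ 2 * (8 ^ d * B * X⁻¹) :=
      mul_le_mul_of_nonneg_left (hQb j) (by positivity)
    have h2 : θ ^ 2 * (8 ^ d * B * X⁻¹) = a ^ 2 * (8 ^ d * B) * X * t ^ 2 := by
      rw [hθ]
      field_simp
    have h3 : θ * (t / sd) = a / sd * X * t ^ 2 := by
      rw [hθ]
      field_simp
    have hcoef : a ^ 2 * (8 ^ d * B) ≤ a / (2 * sd) := by
      calc a ^ 2 * (8 ^ d * B) = a * (a * (8 ^ d * B)) := by ring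
        _ ≤ a * (1 / (2 * sd)) := mul_le_mul_of_nonneg_left haK ha0.le
        _ = a / (2 * sd) := by ring
    have hfinal : a ^ 2 * (8 ^ d * B) * X * t ^ 2 - a / sd * X * t ^ 2 ≤
        -(a / (2 * sd)) * X * t ^ 2 := by
      have hXt : (0:ℝ) ≤ X * t ^ 2 := by positivity
      have hdiff : a ^ 2 * (8 ^ d * B) - a / sd ≤ -(a / (2 * sd)) := by
        have : a / sd - a / (2 * sd) = a / (2 * sd) := by field_simp; ring
        linarith
      have hm := mul_le_mul_of_nonneg_right hdiff hXt
      calc a ^ 2 * (8 ^ d * B) * X * t ^ 2 - a / sd * X * t ^ 2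
          = (a ^ 2 * (8 ^ d * B) - a / sd) * (X * t ^ 2) := by ring
        _ ≤ -(a / (2 * sd)) * (X * t ^ 2) := hm
        _ = -(a / (2 * sd)) * X * t ^ 2 := by ring
    calc θ ^ 2 * Q j - θ * (t / sd) ≤ a ^ 2 * (8 ^ d * B) * X * t ^ 2 - a / sd * X * t ^ 2 := by
          rw [← h2, ← h3]; linarith
      _ ≤ -(a / (2 * sd)) * X * t ^ 2 := hfinal
      _ = -c * X * t ^ 2 := by rw [hc]
  -- rephrase hypotheses in terms of μA
  have hNpois' : ∀ n : ℕ, ℙ {ω | N ω = n} =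
      ENNReal.ofReal (Real.exp (-(μA Set.univ).toReal) * (μA Set.univ).toReal ^ n /
        (Nat.factorial n)) := by
    intro n
    rw [hμAuniv]
    exact hNpois n
  have hZlaw' : ∀ i, Measure.map (Z i) ℙ = (μA Set.univ)⁻¹ • μA := by
    intro i
    rw [hμAuniv]
    exact hZlaw i
  -- the two scalar tails
  have hgbae' : ∀ j, ∀ᵐ z ∂μA, |(fun z => -(g j z)) z| ≤ b := by
    intro j
    filter_upwards [hgbae j] with z hz
    simpa [abs_neg] using hz
  have hplus : ∀ j, ℙ {ω | t / sd ≤ (∑ i ∈ Finset.range (N ω), g j (Z i ω)) - ∫ z, g j z ∂μA} ≤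
      ENNReal.ofReal (Real.exp (θ ^ 2 * Q j - θ * (t / sd))) := fun j =>
    scalar_tail μA hμA0 hμAfin N hNm hNpois' Z hZm hZlaw' hZind hNZ (g j) (hgm j) b hb0
      (hgbae j) θ hθ0 hθb (t / sd)
  have hminus : ∀ j, ℙ {ω | t / sd ≤
      -((∑ i ∈ Finset.range (N ω), g j (Z i ω)) - ∫ z, g j z ∂μA)} ≤
      ENNReal.ofReal (Real.exp (θ ^ 2 * Q j - θ * (t / sd))) := by
    intro j
    have h := scalar_tail μA hμA0 hμAfin N hNm hNpois' Z hZm hZlaw' hZind hNZ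
      (fun z => -(g j z)) ((hgm j).neg) b hb0 (hgbae' j) θ hθ0 hθb (t / sd)
    simp only [neg_sq, integral_neg, Finset.sum_neg_distrib] at h
    have hset : {ω | t / sd ≤ -((∑ i ∈ Finset.range (N ω), g j (Z i ω)) - ∫ z, g j z ∂μA)} =
        {ω | t / sd ≤ (-∑ i ∈ Finset.range (N ω), g j (Z i ω)) - -∫ z, g j z ∂μA} := by
      ext ω
      simp only [Set.mem_setOf_eq]
      constructor <;> intro h' <;> linarith
    rw [hset]
    exact h
  -- the vector field and its integrability
  set F : E → E := fun z => (‖z‖ ^ d)⁻¹ • z with hF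
  have hFm : Measurable F := (measurable_norm.pow_const d).inv.smul measurable_id
  have hFint : Integrable F μA := by
    refine Integrable.mono' (integrable_const b) hFm.aestronglyMeasurable ?_
    rw [hμA]
    refine (ae_restrict_iff' hAm).2 (Filter.Eventually.of_forall ?_)
    intro z hz
    rw [hF]
    calc ‖(‖z‖ ^ d)⁻¹ • z‖ = (‖z‖ ^ d)⁻¹ * ‖z‖ := by
          rw [norm_smul, norm_inv, norm_pow, norm_norm]
      _ ≤ b := hnormbound z hz
  -- coordinates of the centered sum
  have hproj : ∀ (z : E) (j : Fin d), EuclideanSpace.proj (𝕜 := ℝ) j ((‖z‖ ^ d)⁻¹ • z) = g j z := by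
    intro z j
    rw [_root_.map_smul]
    rfl
  have hcoord : ∀ (ω : Ω) (j : Fin d),
      ((∑ i ∈ Finset.range (N ω), (‖Z i ω‖ ^ d)⁻¹ • Z i ω) - ∫ z, F z ∂μA) j
        = (∑ i ∈ Finset.range (N ω), g j (Z i ω)) - ∫ z, g j z ∂μA := by
    intro ω j
    set L := EuclideanSpace.proj (𝕜 := ℝ) j with hL
    have h3 : L (∫ z, F z ∂μA) = ∫ z, g j z ∂μA := by
      rw [← L.integral_comp_comm hFint]
      exact integral_congr_ae (Filter.Eventually.of_forall (fun z => hproj z j))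
    calc ((∑ i ∈ Finset.range (N ω), (‖Z i ω‖ ^ d)⁻¹ • Z i ω) - ∫ z, F z ∂μA) j
        = L ((∑ i ∈ Finset.range (N ω), (‖Z i ω‖ ^ d)⁻¹ • Z i ω) - ∫ z, F z ∂μA) := rfl
      _ = (∑ i ∈ Finset.range (N ω), L ((‖Z i ω‖ ^ d)⁻¹ • Z i ω)) - L (∫ z, F z ∂μA) := by
          rw [map_sub, map_sum]
      _ = (∑ i ∈ Finset.range (N ω), g j (Z i ω)) - ∫ z, g j z ∂μA := by
          rw [Finset.sum_congr rfl (fun i _ => hproj (Z i ω) j), h3]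
  -- inclusion into coordinate events
  haveI : Nonempty (Fin d) := ⟨⟨0, by omega⟩⟩
  have hincl : {ω | t ≤ ‖(∑ i ∈ Finset.range (N ω), (‖Z i ω‖ ^ d)⁻¹ • Z i ω) - ∫ z, F z ∂μA‖}
      ⊆ ⋃ j : Fin d,
        ({ω | t / sd ≤ (∑ i ∈ Finset.range (N ω), g j (Z i ω)) - ∫ z, g j z ∂μA}
          ∪ {ω | t / sd ≤ -((∑ i ∈ Finset.range (N ω), g j (Z i ω)) - ∫ z, g j z ∂μA)}) := by
    intro ω hω
    simp only [Set.mem_setOf_eq] at hω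
    by_contra hnot
    simp only [Set.mem_iUnion, Set.mem_union, Set.mem_setOf_eq, not_exists, not_or,
      not_le] at hnot
    set x := (∑ i ∈ Finset.range (N ω), (‖Z i ω‖ ^ d)⁻¹ • Z i ω) - ∫ z, F z ∂μA with hx
    have habsx : ∀ j : Fin d, |x j| < t / sd := by
      intro j
      obtain ⟨h1, h2⟩ := hnot j
      rw [← hcoord ω j] at h1 h2
      rw [abs_lt]
      constructor <;> linarith
    have hnormx : ‖x‖ < t := by
      rw [EuclideanSpace.norm_eq]
      have hsumlt : ∑ i : Fin d, ‖x i‖ ^ 2 < ∑ _i : Fin d, (t / sd) ^ 2 := by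
        apply Finset.sum_lt_sum_of_nonempty Finset.univ_nonempty
        intro i _
        rw [Real.norm_eq_abs]
        exact pow_lt_pow_left₀ (habsx i) (abs_nonneg _) (by norm_num)
      have hsum2 : ∑ _i : Fin d, (t / sd) ^ 2 = t ^ 2 := by
        rw [Finset.sum_const, Finset.card_univ, Fintype.card_fin, nsmul_eq_mul, div_pow, hsd2]
        field_simp
      calc √(∑ i : Fin d, ‖x i‖ ^ 2) < √(t ^ 2) := by
            apply Real.sqrt_lt_sqrt (Finset.sum_nonneg (fun i _ => sq_nonneg _))
            rw [← hsum2]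
            exact hsumlt
        _ = t := Real.sqrt_sq ht.le
    linarith
  -- union bound
  calc ℙ {ω | t ≤ ‖(∑ i ∈ Finset.range (N ω), (‖Z i ω‖ ^ d)⁻¹ • Z i ω) - ∫ z, F z ∂μA‖}
      ≤ ℙ (⋃ j : Fin d,
        ({ω | t / sd ≤ (∑ i ∈ Finset.range (N ω), g j (Z i ω)) - ∫ z, g j z ∂μA}
          ∪ {ω | t / sd ≤ -((∑ i ∈ Finset.range (N ω), g j (Z i ω)) - ∫ z, g j z ∂μA)})) :=
        measure_mono hincl
    _ ≤ ∑' j : Fin d, ℙ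
        ({ω | t / sd ≤ (∑ i ∈ Finset.range (N ω), g j (Z i ω)) - ∫ z, g j z ∂μA}
          ∪ {ω | t / sd ≤ -((∑ i ∈ Finset.range (N ω), g j (Z i ω)) - ∫ z, g j z ∂μA)}) :=
        measure_iUnion_le _
    _ ≤ ∑' _j : Fin d, (ENNReal.ofReal (Real.exp (-c * X * t ^ 2)) +
          ENNReal.ofReal (Real.exp (-c * X * t ^ 2))) := by
        apply ENNReal.tsum_le_tsum
        intro j
        have hb1 := (hplus j).trans (ENNReal.ofReal_le_ofReal
          (Real.exp_le_exp.2 (hexp j)))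
        have hb2 := (hminus j).trans (ENNReal.ofReal_le_ofReal
          (Real.exp_le_exp.2 (hexp j)))
        exact (measure_union_le _ _).trans (add_le_add hb1 hb2)
    _ = (d : ENNReal) * (ENNReal.ofReal (Real.exp (-c * X * t ^ 2)) +
          ENNReal.ofReal (Real.exp (-c * X * t ^ 2))) := by
        rw [tsum_fintype, Finset.sum_const, Finset.card_univ, Fintype.card_fin, nsmul_eq_mul]
    _ = ENNReal.ofReal (2 * ↑d * Real.exp (-c * X * t ^ 2)) := by
        rw [ENNReal.ofReal_mul (by positivity : (0:ℝ) ≤ 2 * (d:ℝ)),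
          ENNReal.ofReal_mul (by norm_num : (0:ℝ) ≤ 2), ENNReal.ofReal_ofNat,
          ENNReal.ofReal_natCast]
        ring
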